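/- Let n ≥ 2, let u ∈ ℤ^{n(n−1)} satisfy uM = 0, and suppose supp(u) = supp(u_{S,T}) for some partition [n] = S ∪ T into two disjoint nonempty sets. Then there exists c ∈ ℤ such that u = c·u_{S,T}. -/
import Mathlib

open Finset

/-- The matrix `M̄_{i,j}` (for `i ≠ j` in `[n]`, with the last index playing the role of `n`). -/
def Mbar (n : ℕ) (i j : Fin n) : Matrix (Fin (n - 1)) (Fin (n - 1)) ℝ :=
  Matrix.of fun a b =>
    if (a : ℕ) = (i : ℕ) ∧ (b : ℕ) = (j : ℕ) then 1
    else if (a : ℕ) = (i : ℕ) ∧ (j : ℕ) = n - 1 then -1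
    else if (i : ℕ) = n - 1 ∧ (b : ℕ) = (j : ℕ) then -1
    else 0

/-- `uM = ∑_{i ≠ j} u(i,j) · M̄_{i,j}`. -/
def uDotM (n : ℕ) (u : Fin n → Fin n → ℤ) : Matrix (Fin (n - 1)) (Fin (n - 1)) ℝ :=
  ∑ i, ∑ j, if i = j then 0 else (u i j : ℝ) • Mbar n i j

/-- The vector `u_{S,T}` for the partition `[n] = S ∪ Sᶜ`. -/
def uST (n : ℕ) (S : Finset (Fin n)) (i j : Fin n) : ℤ :=
  if i ∈ S ∧ j ∉ S then 1 else if i ∉ S ∧ j ∈ S then -1 else 0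

/-- The support `supp(u)` of a vector indexed by ordered pairs. -/
def suppV (n : ℕ) (u : Fin n → Fin n → ℤ) : Set (Fin n × Fin n) :=
  {e | u e.1 e.2 ≠ 0}

lemma Mbar_eq (n : ℕ) (hn : 2 ≤ n) (i j : Fin n) (a b : Fin (n-1)) :
    Mbar n i j a b =
      (if i = Fin.castLE (Nat.sub_le n 1) a then (1:ℝ) else 0) *
        (if j = Fin.castLE (Nat.sub_le n 1) b then 1 else 0)
      - (if i = Fin.castLE (Nat.sub_le n 1) a then (1:ℝ) else 0) *
        (if j = (⟨n-1, by omega⟩ : Fin n) then 1 else 0)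
      - (if i = (⟨n-1, by omega⟩ : Fin n) then (1:ℝ) else 0) *
        (if j = Fin.castLE (Nat.sub_le n 1) b then 1 else 0) := by
  have hb := b.2; have ha := a.2
  simp only [Mbar, Matrix.of_apply, Fin.ext_iff, Fin.coe_castLE]
  split_ifs <;> norm_num <;> omega

lemma entry_eq (n : ℕ) (hn : 2 ≤ n) (u : Fin n → Fin n → ℤ) (hdiag : ∀ i, u i i = 0)
    (a b : Fin (n-1)) :
    uDotM n u a b =
      (u (Fin.castLE (Nat.sub_le n 1) a) (Fin.castLE (Nat.sub_le n 1) b) : ℝ)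
      - u (Fin.castLE (Nat.sub_le n 1) a) ⟨n-1, by omega⟩
      - u (⟨n-1, by omega⟩ : Fin n) (Fin.castLE (Nat.sub_le n 1) b) := by
  have step : ∀ i j : Fin n,
      (if i = j then (0 : Matrix (Fin (n-1)) (Fin (n-1)) ℝ) else (u i j : ℝ) • Mbar n i j) a b
        = (u i j : ℝ) * Mbar n i j a b := by
    intro i j
    split
    · rename_i h; subst h; simp [hdiag]
    · simp
  have : uDotM n u a b = ∑ i, ∑ j, (u i j : ℝ) * Mbar n i j a b := by
    simp only [uDotM, Matrix.sum_apply]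
    exact Finset.sum_congr rfl fun i _ => Finset.sum_congr rfl fun j _ => step i j
  rw [this]
  simp only [Mbar_eq n hn _ _ a b, mul_sub, Finset.sum_sub_distrib, mul_ite, ite_mul,
    mul_one, mul_zero, one_mul, zero_mul, Finset.sum_ite_eq', Finset.mem_univ, if_true]

theorem stmt7 (n : ℕ) (hn : 2 ≤ n) (u : Fin n → Fin n → ℤ)
    (hdiag : ∀ i, u i i = 0) (hM : uDotM n u = 0)
    (S : Finset (Fin n)) (hS : S.Nonempty) (hT : Sᶜ.Nonempty)
    (hsupp : suppV n u = suppV n (uST n S)) :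
    ∃ c : ℤ, ∀ i j, u i j = c * uST n S i j := by
  set last : Fin n := ⟨n-1, by omega⟩ with hlastdef
  -- vanishing on same side
  have hu0 : ∀ i j : Fin n, ((i ∈ S) ↔ (j ∈ S)) → u i j = 0 := by
    intro i j hij
    by_contra h
    have h2 : (i, j) ∈ suppV n (uST n S) := hsupp ▸ h
    simp only [suppV, Set.mem_setOf_eq, uST] at h2
    split_ifs at h2 with h3 h4 <;> tauto
  -- the linear relations coming from uM = 0
  have key : ∀ (i j : Fin n), (i:ℕ) < n-1 → (j:ℕ) < n-1 →
      u i j = u i last + u last j := by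
    intro i j hi hj
    have h0 : uDotM n u ⟨(i:ℕ), hi⟩ ⟨(j:ℕ), hj⟩ = 0 := by rw [hM]; rfl
    rw [entry_eq n hn u hdiag] at h0
    have h1 : Fin.castLE (Nat.sub_le n 1) (⟨(i:ℕ), hi⟩ : Fin (n-1)) = i := rfl
    have h2 : Fin.castLE (Nat.sub_le n 1) (⟨(j:ℕ), hj⟩ : Fin (n-1)) = j := rfl
    rw [h1, h2] at h0
    have h3 : u i j - u i last - u last j = 0 := by exact_mod_cast h0
    omega
  have hlt : ∀ i : Fin n, i ≠ last → (i:ℕ) < n-1 := by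
    intro i h
    have h2 := i.2
    have h3 : (i:ℕ) ≠ n-1 := fun hh => h (Fin.ext hh)
    omega
  have anti : ∀ i : Fin n, i ≠ last → u i last = - u last i := by
    intro i h
    have := key i i (hlt i h) (hlt i h)
    rw [hdiag] at this
    omega
  by_cases hls : last ∈ S
  · -- last is on the S side
    obtain ⟨t, ht⟩ := hT
    rw [Finset.mem_compl] at ht
    have htl : t ≠ last := fun h => ht (h ▸ hls)
    refine ⟨u last t, fun i j => ?_⟩
    have const : ∀ j : Fin n, j ∉ S → u last j = u last t := by
      intro j hj
      by_cases hjt : j = t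
      · rw [hjt]
      · have hjl : j ≠ last := fun h => hj (h ▸ hls)
        have h1 := key j t (hlt j hjl) (hlt t htl)
        have h2 : u j t = 0 := hu0 j t (by tauto)
        have h3 := anti j hjl
        omega
    by_cases hi : i ∈ S <;> by_cases hj : j ∈ S
    · rw [hu0 i j (by tauto)]; simp [uST, hi, hj]
    · -- i ∈ S, j ∉ S : value is u last t
      have huv : uST n S i j = 1 := by simp [uST, hi, hj]
      rw [huv, mul_one]
      by_cases hil : i = last
      · rw [hil]; exact const j hj
      · have hjl : j ≠ last := fun h => hj (h ▸ hls)
        have h1 := key i j (hlt i hil) (hlt j hjl)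
        have h2 : u i last = 0 := hu0 i last (by tauto)
        have h3 := const j hj
        omega
    · -- i ∉ S, j ∈ S : value is -(u last t)
      have huv : uST n S i j = -1 := by simp [uST, hi, hj]
      rw [huv]
      have hil : i ≠ last := fun h => hi (h ▸ hls)
      have h3 := anti i hil
      have h4 := const i hi
      by_cases hjl : j = last
      · rw [hjl]; omega
      · have h1 := key i j (hlt i hil) (hlt j hjl)
        have h2 : u last j = 0 := hu0 last j (by tauto)
        omega
    · rw [hu0 i j (by tauto)]; simp [uST, hi, hj]
  · -- last is on the T side
    obtain ⟨s, hs⟩ := hS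
    have hsl : s ≠ last := fun h => hls (h ▸ hs)
    refine ⟨u s last, fun i j => ?_⟩
    have const : ∀ i : Fin n, i ∈ S → u i last = u s last := by
      intro i hi
      by_cases his : i = s
      · rw [his]
      · have hil : i ≠ last := fun h => hls (h ▸ hi)
        have h1 := key i s (hlt i hil) (hlt s hsl)
        have h2 : u i s = 0 := hu0 i s (by tauto)
        have h3 := anti s hsl
        omega
    by_cases hi : i ∈ S <;> by_cases hj : j ∈ S
    · rw [hu0 i j (by tauto)]; simp [uST, hi, hj]
    · -- i ∈ S, j ∉ S : value is u s last
      have huv : uST n S i j = 1 := by simp [uST, hi, hj]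
      rw [huv, mul_one]
      have hil : i ≠ last := fun h => hls (h ▸ hi)
      by_cases hjl : j = last
      · rw [hjl]; exact const i hi
      · have h1 := key i j (hlt i hil) (hlt j hjl)
        have h2 : u last j = 0 := hu0 last j (by tauto)
        have h3 := const i hi
        omega
    · -- i ∉ S, j ∈ S : value is -(u s last)
      have huv : uST n S i j = -1 := by simp [uST, hi, hj]
      rw [huv]
      have hjl : j ≠ last := fun h => hls (h ▸ hj)
      have h3 := anti j hjl
      have h4 := const j hj
      by_cases hil : i = last
      · rw [hil]; omega
      · have h1 := key i j (hlt i hil) (hlt j hjl)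
        have h2 : u i last = 0 := hu0 i last (by tauto)
        omega
    · rw [hu0 i j (by tauto)]; simp [uST, hi, hj]
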